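/- Any triangle in the Euclidean plane whose three side lengths are all at least 1 and whose area is at most 1/4 has two angles each of measure at most π/6. -/

import Mathlib

open Real EuclideanGeometry

noncomputable def triArea (A B C : EuclideanSpace ℝ (Fin 2)) : ℝ :=
  |(B 0 - A 0) * (C 1 - A 1) - (B 1 - A 1) * (C 0 - A 0)| / 2

lemma sin_mul_norms (x y : EuclideanSpace ℝ (Fin 2)) :
    Real.sin (InnerProductGeometry.angle x y) * (‖x‖ * ‖y‖)
      = |x 0 * y 1 - x 1 * y 0| := by
  rw [InnerProductGeometry.sin_angle_mul_norm_mul_norm]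
  have hx : ∀ a b : EuclideanSpace ℝ (Fin 2),
      (inner ℝ a b : ℝ) = a 0 * b 0 + a 1 * b 1 := by
    intro a b
    simp [PiLp.inner_apply, Fin.sum_univ_two, mul_comm]
  rw [hx, hx, hx]
  have : x 0 * x 0 + x 1 * x 1 = 0 ∨ True := by tauto
  have h : (x 0 * x 0 + x 1 * x 1) * (y 0 * y 0 + y 1 * y 1) -
      (x 0 * y 0 + x 1 * y 1) * (x 0 * y 0 + x 1 * y 1)
      = (x 0 * y 1 - x 1 * y 0) ^ 2 := by ring
  rw [h, Real.sqrt_sq_eq_abs]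

lemma small_angle {θ : ℝ} (h0 : 0 ≤ θ) (hπ : θ ≤ π) (hs : Real.sin θ ≤ 1 / 2) :
    θ ≤ π / 6 ∨ 5 * π / 6 ≤ θ := by
  by_contra hc
  push_neg at hc
  obtain ⟨h1, h2⟩ := hc
  have key : ∀ φ : ℝ, π / 6 < φ → φ ≤ π / 2 → 1 / 2 < Real.sin φ := by
    intro φ hφ1 hφ2
    have := Real.strictMonoOn_sin
      (Set.mem_Icc.2 ⟨by linarith [Real.pi_pos], by linarith [Real.pi_pos]⟩)
      (Set.mem_Icc.2 ⟨by linarith [Real.pi_pos], hφ2⟩) hφ1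
    rwa [Real.sin_pi_div_six] at this
  rcases le_or_gt θ (π / 2) with hθ | hθ
  · exact absurd hs (not_le.2 (key θ h1 hθ))
  · have := key (π - θ) (by linarith) (by linarith)
    rw [Real.sin_pi_sub] at this
    exact absurd hs (not_le.2 this)

theorem stmt_1 (A B C : EuclideanSpace ℝ (Fin 2))
    (hncol : ¬ Collinear ℝ ({A, B, C} : Set (EuclideanSpace ℝ (Fin 2))))
    (hAB : 1 ≤ dist A B) (hBC : 1 ≤ dist B C) (hCA : 1 ≤ dist C A)
    (harea : triArea A B C ≤ 1 / 4) :
    (∠ B A C ≤ π / 6 ∧ ∠ A B C ≤ π / 6) ∨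
    (∠ B A C ≤ π / 6 ∧ ∠ A C B ≤ π / 6) ∨
    (∠ A B C ≤ π / 6 ∧ ∠ A C B ≤ π / 6) := by
  have hBA : B ≠ A := by
    intro h; rw [h] at hAB; simp at hAB; linarith
  have hCA' : C ≠ A := by
    intro h; rw [h] at hCA; simp at hCA; linarith
  -- the cross product magnitude is the same at each vertex
  set c : ℝ := |(B 0 - A 0) * (C 1 - A 1) - (B 1 - A 1) * (C 0 - A 0)| with hc
  have hcle : c ≤ 1 / 2 := by
    have : c / 2 ≤ 1 / 4 := harea
    linarith
  -- sine bounds for each angle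
  have sin_bound : ∀ P Q R : EuclideanSpace ℝ (Fin 2),
      1 ≤ dist Q P → 1 ≤ dist Q R →
      |(P 0 - Q 0) * (R 1 - Q 1) - (P 1 - Q 1) * (R 0 - Q 0)| ≤ 1 / 2 →
      Real.sin (∠ P Q R) ≤ 1 / 2 := by
    intro P Q R h1 h2 h3
    have key := sin_mul_norms (P - Q) (R - Q)
    have hang : ∠ P Q R = InnerProductGeometry.angle (P - Q) (R - Q) := rfl
    have hnorm1 : ‖P - Q‖ = dist Q P := by rw [dist_comm]; exact (dist_eq_norm _ _).symm
    have hnorm2 : ‖R - Q‖ = dist Q R := by rw [dist_comm]; exact (dist_eq_norm _ _).symm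
    have happ : ∀ (i : Fin 2), (P - Q) i = P i - Q i := fun i => rfl
    simp only [happ] at key
    rw [hnorm1, hnorm2] at key
    have hsnn : 0 ≤ Real.sin (∠ P Q R) := Real.sin_nonneg_of_nonneg_of_le_pi
      (angle_nonneg _ _ _) (angle_le_pi _ _ _)
    have hprod : 1 ≤ dist Q P * dist Q R := one_le_mul_of_one_le_of_one_le h1 h2
    calc Real.sin (∠ P Q R) = Real.sin (∠ P Q R) * 1 := (mul_one _).symm
      _ ≤ Real.sin (∠ P Q R) * (dist Q P * dist Q R) := by
          apply mul_le_mul_of_nonneg_left hprod hsnn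
      _ = |(P 0 - Q 0) * (R 1 - Q 1) - (P 1 - Q 1) * (R 0 - Q 0)| := by rw [hang]; exact key
      _ ≤ 1 / 2 := h3
  have sA : Real.sin (∠ B A C) ≤ 1 / 2 := by
    apply sin_bound B A C hAB (by rwa [dist_comm] at hCA) hcle
  have sB : Real.sin (∠ A B C) ≤ 1 / 2 := by
    apply sin_bound A B C (by rwa [dist_comm] at hAB) hBC
    have : (A 0 - B 0) * (C 1 - B 1) - (A 1 - B 1) * (C 0 - B 0)
        = -((B 0 - A 0) * (C 1 - A 1) - (B 1 - A 1) * (C 0 - A 0)) := by ring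
    rw [this, abs_neg]; exact hcle
  have sC : Real.sin (∠ A C B) ≤ 1 / 2 := by
    apply sin_bound A C B hCA (by rwa [dist_comm] at hBC)
    have : (A 0 - C 0) * (B 1 - C 1) - (A 1 - C 1) * (B 0 - C 0)
        = (B 0 - A 0) * (C 1 - A 1) - (B 1 - A 1) * (C 0 - A 0) := by ring
    rw [this]; exact hcle
  have dA := small_angle (angle_nonneg B A C) (angle_le_pi B A C) sA
  have dB := small_angle (angle_nonneg A B C) (angle_le_pi A B C) sB
  have dC := small_angle (angle_nonneg A C B) (angle_le_pi A C B) sC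
  have hsum : ∠ A B C + ∠ B C A + ∠ C A B = π :=
    angle_add_angle_add_angle_eq_pi C hBA
  rw [angle_comm B C A, angle_comm C A B] at hsum
  have hposA := angle_nonneg B A C
  have hposB := angle_nonneg A B C
  have hposC := angle_nonneg A C B
  have hπ := Real.pi_pos
  rcases dA with dA | dA <;> rcases dB with dB | dB <;> rcases dC with dC | dC
  · exact Or.inl ⟨dA, dB⟩
  · exact Or.inl ⟨dA, dB⟩
  · exact Or.inr (Or.inl ⟨dA, dC⟩)
  · linarith
  · exact Or.inr (Or.inr ⟨dB, dC⟩)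
  · linarith
  · linarith
  · linarith
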